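/- Fix T > 0, a finite N ∈ ℕ, positive reals (l_n)_{n=1}^N with Σ_{n=1}^N l_n = T, and two sequences of reals h = (h_n)_{n=1}^N and h' = (h'_n)_{n=1}^N. Let F_{l,h} and F_{l,h'} be the piecewise linear convex functions built from (l,h) and (l,h') via the formula F_{l,h}(t) := Σ_{n=1}^N h_n min{(t − a_n)^+/l_n, 1} with a_n := Σ_{k=1}^N l_k·1{h_k/l_k < h_n/l_n} + Σ_{k=1}^{n−1} l_k·1{h_k/l_k = h_n/l_n}, and a'_n defined analogously from h'. Define G_{l,h,h'}(t) := Σ_{n=1}^N h_n min{(t − a'_n)^+/l_n, 1} for t ∈ [0,T]. Then max{ ‖F_{l,h} − F_{l,h'}‖_∞, ‖F_{l,h'} − G_{l,h,h'}‖_∞ } ≤ max{ Σ_{n=1}^N (h_n − h'_n)^+, Σ_{n=1}^N (h'_n − h_n)^+ }, where ‖f‖_∞ := sup_{t∈[0,T]} |f(t)| and x^+ := max{x,0}. -/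

import Mathlib

open Filter Set
open scoped ENNReal

noncomputable section

/-- Left endpoint `a n` of the face of index `n` (among indices `n` with `(n : ℕ∞) < N`):
the total length of faces of strictly smaller slope plus the lengths of earlier faces of
equal slope. -/
def leftPt (N : ℕ∞) (l h : ℕ → ℝ) (n : ℕ) : ℝ :=
  (∑' k : ℕ, if (k : ℕ∞) < N ∧ h k / l k < h n / l n then l k else 0)
  + ∑ k ∈ Finset.range n, (if (k : ℕ∞) < N ∧ h k / l k = h n / l n then l k else 0)

/-- The piecewise linear convex function on `[0,T]` whose faces have lengths `l n` and
heights `h n` for `(n : ℕ∞) < N`. -/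
def FLH (N : ℕ∞) (l h : ℕ → ℝ) (t : ℝ) : ℝ :=
  ∑' n : ℕ, if (n : ℕ∞) < N then h n * min (max (t - leftPt N l h n) 0 / l n) 1 else 0

namespace FLHaux

/-- The strict total order on face indices: smaller slope first, ties by index. -/
def prec (s : ℕ → ℝ) (k n : ℕ) : Prop := s k < s n ∨ (s k = s n ∧ k < n)

instance (s : ℕ → ℝ) (k n : ℕ) : Decidable (prec s k n) := by
  unfold prec; infer_instance

lemma prec_trans {s : ℕ → ℝ} {a b c : ℕ} (h1 : prec s a b) (h2 : prec s b c) :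
    prec s a c := by
  rcases h1 with h1 | ⟨e1, h1⟩ <;> rcases h2 with h2 | ⟨e2, h2⟩
  · exact Or.inl (h1.trans h2)
  · exact Or.inl (lt_of_lt_of_eq h1 e2)
  · exact Or.inl (lt_of_eq_of_lt e1 h2)
  · exact Or.inr ⟨e1.trans e2, h1.trans h2⟩

lemma prec_irrefl (s : ℕ → ℝ) (n : ℕ) : ¬ prec s n n := by
  rintro (h | ⟨_, h⟩) <;> exact absurd h (lt_irrefl _)

lemma prec_total {s : ℕ → ℝ} {k n : ℕ} (h : k ≠ n) : prec s k n ∨ prec s n k := by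
  rcases lt_trichotomy (s k) (s n) with hs | hs | hs
  · exact Or.inl (Or.inl hs)
  · rcases lt_or_gt_of_ne h with hk | hk
    · exact Or.inl (Or.inr ⟨hs, hk⟩)
    · exact Or.inr (Or.inr ⟨hs.symm, hk⟩)
  · exact Or.inr (Or.inl hs)

/-- Left endpoint of face `n` when the faces indexed by `A` are laid out in `prec s` order. -/
def aF (l s : ℕ → ℝ) (A : Finset ℕ) (n : ℕ) : ℝ :=
  ∑ k ∈ A, if prec s k n then l k else 0

lemma aF_nonneg (l s : ℕ → ℝ) (A : Finset ℕ) (hl : ∀ n ∈ A, 0 ≤ l n) (n : ℕ) :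
    0 ≤ aF l s A n := by
  apply Finset.sum_nonneg
  intro k hk
  split_ifs
  · exact hl k hk
  · exact le_refl 0

lemma aF_chain (l s : ℕ → ℝ) {A : Finset ℕ} (hl : ∀ n ∈ A, 0 ≤ l n) {k n : ℕ}
    (hk : k ∈ A) (hkn : prec s k n) : aF l s A k + l k ≤ aF l s A n := by
  have h1 : aF l s A k + l k
      = ∑ j ∈ A, ((if prec s j k then l j else 0) + (if j = k then l j else 0)) := by
    rw [Finset.sum_add_distrib]
    congr 1
    rw [Finset.sum_ite_eq' A k l, if_pos hk]
  rw [h1]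
  apply Finset.sum_le_sum
  intro j hj
  by_cases h2 : prec s j k
  · have h3 : prec s j n := prec_trans h2 hkn
    have hne : j ≠ k := by rintro rfl; exact prec_irrefl _ _ h2
    simp [h2, h3, hne]
  · by_cases h3 : j = k
    · subst h3; simp [h2, hkn]
    · simp only [if_neg h2, if_neg h3, add_zero]
      split_ifs with h4
      · exact hl j hj
      · exact le_refl 0

lemma min_max_add {L x : ℝ} (hL : 0 ≤ L) (hx : 0 < x) (t : ℝ) :
    min (max (t - L) 0) x + min (max t 0) L = min (max t 0) (L + x) := by
  rcases le_total t 0 with h1 | h1 <;> rcases le_total t L with h2 | h2 <;>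
    rcases le_total t (L + x) with h3 | h3 <;>
    simp only [min_def, max_def] <;> split_ifs <;> linarith

/-- The tiling identity: the faces laid out in `prec s` order tile `[0, ∑ l]`. -/
lemma sum_ramp (l s : ℕ → ℝ) (t : ℝ) :
    ∀ (A : Finset ℕ), (∀ n ∈ A, 0 < l n) →
    ∑ n ∈ A, min (max (t - aF l s A n) 0) (l n) = min (max t 0) (∑ n ∈ A, l n) := by
  intro A
  induction A using Finset.strongInduction with
  | _ A ih =>
    intro hl
    rcases A.eq_empty_or_nonempty with rfl | hA
    · simp [min_eq_right (le_max_right t 0)]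
    · -- find the `prec`-maximal element m of A
      obtain ⟨m₁, hm₁A, hm₁⟩ := Finset.exists_max_image A s hA
      have hBne : (A.filter fun k => s k = s m₁).Nonempty := ⟨m₁, by simp [hm₁A]⟩
      set m := (A.filter fun k => s k = s m₁).max' hBne with hmdef
      have hmB : m ∈ A.filter fun k => s k = s m₁ := Finset.max'_mem _ hBne
      have hmA : m ∈ A := (Finset.mem_filter.mp hmB).1
      have hsm : s m = s m₁ := (Finset.mem_filter.mp hmB).2
      have hmax : ∀ n ∈ A, ¬ prec s m n := by
        rintro n hn (hp | ⟨he, hlt⟩)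
        · rw [hsm] at hp; exact absurd (hm₁ n hn) (not_le.mpr hp)
        · have hnB : n ∈ A.filter fun k => s k = s m₁ :=
            Finset.mem_filter.mpr ⟨hn, by rw [← he, hsm]⟩
          exact absurd (Finset.le_max' _ n hnB) (not_le.mpr hlt)
      set A' := A.erase m with hA'def
      have hsub : A' ⊂ A := Finset.erase_ssubset hmA
      have haF : ∀ n ∈ A, aF l s A n = aF l s A' n := by
        intro n hn
        unfold aF
        rw [hA'def, ← Finset.add_sum_erase A _ hmA, if_neg (hmax n hn), zero_add]
      have haFm : aF l s A m = ∑ k ∈ A', l k := by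
        unfold aF
        rw [hA'def, ← Finset.add_sum_erase A _ hmA, if_neg (prec_irrefl s m), zero_add]
        apply Finset.sum_congr rfl
        intro k hk
        have hkA : k ∈ A := Finset.mem_of_mem_erase hk
        have hkm : k ≠ m := Finset.ne_of_mem_erase hk
        rcases prec_total (s := s) hkm with hp | hp
        · rw [if_pos hp]
        · exact absurd hp (hmax k hkA)
      have hl' : ∀ n ∈ A', 0 < l n := fun n hn => hl n (Finset.mem_of_mem_erase hn)
      have key := ih A' hsub hl'
      have hL'0 : 0 ≤ ∑ k ∈ A', l k := Finset.sum_nonneg fun k hk => (hl' k hk).le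
      have hlm : 0 < l m := hl m hmA
      rw [← Finset.add_sum_erase A _ hmA, ← Finset.add_sum_erase A l hmA, ← hA'def]
      have hrest : ∑ n ∈ A', min (max (t - aF l s A n) 0) (l n)
          = min (max t 0) (∑ k ∈ A', l k) := by
        rw [Finset.sum_congr rfl (fun n hn =>
          by rw [haF n (Finset.mem_of_mem_erase hn)])]
        exact key
      rw [hrest, haFm, add_comm (l m) (∑ x ∈ A', l x)]
      exact min_max_add hL'0 hlm t

/-- Hardy–Littlewood-type inequality: the sorted arrangement minimizes the partial sums. -/
lemma HL (l s : ℕ → ℝ) (A : Finset ℕ) (hl : ∀ n ∈ A, 0 < l n) (t : ℝ)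
    (m' : ℕ → ℝ) (hm'0 : ∀ n ∈ A, 0 ≤ m' n) (hm'1 : ∀ n ∈ A, m' n ≤ l n)
    (hsum : ∑ n ∈ A, m' n = min (max t 0) (∑ n ∈ A, l n)) :
    ∑ n ∈ A, s n * min (max (t - aF l s A n) 0) (l n) ≤ ∑ n ∈ A, s n * m' n := by
  set m : ℕ → ℝ := fun n => min (max (t - aF l s A n) 0) (l n) with hmdef
  have hsumm : ∑ n ∈ A, m n = min (max t 0) (∑ n ∈ A, l n) := sum_ramp l s t A hl
  show ∑ n ∈ A, s n * m n ≤ ∑ n ∈ A, s n * m' n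
  rcases le_or_gt t 0 with ht | ht
  · -- everything is zero
    have hz : min (max t 0) (∑ n ∈ A, l n) = 0 := by
      rw [max_eq_right ht]
      exact min_eq_left (Finset.sum_nonneg fun n hn => (hl n hn).le)
    have hm0 : ∀ n ∈ A, m n = 0 := by
      intro n hn
      have h1 : t - aF l s A n ≤ 0 := by
        have := aF_nonneg l s A (fun k hk => (hl k hk).le) n
        linarith
      rw [hmdef]
      simp only
      rw [max_eq_right h1]
      exact min_eq_left (hl n hn).le
    have hm'z : ∀ n ∈ A, m' n = 0 := by
      rw [hz] at hsum
      intro n hn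
      exact (Finset.sum_eq_zero_iff_of_nonneg hm'0).mp hsum n hn
    have l1 : ∑ n ∈ A, s n * m n = 0 :=
      Finset.sum_eq_zero fun n hn => by rw [hm0 n hn, mul_zero]
    have l2 : ∑ n ∈ A, s n * m' n = 0 :=
      Finset.sum_eq_zero fun n hn => by rw [hm'z n hn, mul_zero]
    rw [l1, l2]
  · rcases A.eq_empty_or_nonempty with rfl | hA
    · simp
    · -- S = faces already started
      have hSne : (A.filter fun n => aF l s A n < t).Nonempty := by
        obtain ⟨m₀, hm₀A, hmin⟩ := Finset.exists_min_image A (aF l s A) hA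
        refine ⟨m₀, Finset.mem_filter.mpr ⟨hm₀A, ?_⟩⟩
        by_contra hc
        push_neg at hc
        have hpos : 0 < aF l s A m₀ := lt_of_lt_of_le ht hc
        have : (0 : ℝ) < ∑ k ∈ A, if prec s k m₀ then l k else 0 := hpos
        obtain ⟨j, hjA, hj⟩ := Finset.exists_lt_of_sum_lt (by simpa using this :
          ∑ k ∈ A, (0 : ℝ) < ∑ k ∈ A, if prec s k m₀ then l k else 0)
        have hjp : prec s j m₀ := by
          by_contra hjp
          rw [if_neg hjp] at hj
          exact absurd hj (lt_irrefl _)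
        have hchain := aF_chain l s (fun k hk => (hl k hk).le) hjA hjp
        have : aF l s A j < aF l s A m₀ := by
          have := hl j hjA; linarith
        exact absurd (hmin j hjA) (not_le.mpr this)
      obtain ⟨mσ, hmσS, hσ⟩ := Finset.exists_max_image _ s hSne
      set σ := s mσ with hσdef
      have hmm' : ∑ n ∈ A, m n = ∑ n ∈ A, m' n := by rw [hsumm, hsum]
      have key : ∑ n ∈ A, (s n - σ) * (m n - m' n) ≤ 0 := by
        apply Finset.sum_nonpos
        intro n hn
        rcases lt_trichotomy (s n) σ with hlt | heq | hgt
        · -- face n fully used in sorted arrangement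
          have hpn : prec s n mσ := Or.inl hlt
          have hchain := aF_chain l s (fun k hk => (hl k hk).le) hn hpn
          have hmσt : aF l s A mσ < t := (Finset.mem_filter.mp hmσS).2
          have hln : 0 < l n := hl n hn
          have hmn : m n = l n := by
            rw [hmdef]
            simp only
            rw [max_eq_left (by linarith)]
            exact min_eq_right (by linarith)
          have := hm'1 n hn
          nlinarith
        · rw [heq]; simp
        · have hnS : n ∉ A.filter fun k => aF l s A k < t := by
            intro hnS
            exact absurd (hσ n hnS) (not_le.mpr hgt)
          have hta : t ≤ aF l s A n := by
            by_contra hc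
            push_neg at hc
            exact hnS (Finset.mem_filter.mpr ⟨hn, hc⟩)
          have hmn : m n = 0 := by
            rw [hmdef]
            simp only
            rw [max_eq_right (by linarith)]
            exact min_eq_left (hl n hn).le
          have := hm'0 n hn
          nlinarith
      have expand : ∑ n ∈ A, (s n - σ) * (m n - m' n)
          = (∑ n ∈ A, s n * m n) - (∑ n ∈ A, s n * m' n)
            - σ * ((∑ n ∈ A, m n) - (∑ n ∈ A, m' n)) := by
        rw [Finset.sum_congr rfl (fun n _ => show (s n - σ) * (m n - m' n)
          = (s n * m n - s n * m' n) - σ * (m n - m' n) by ring),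
          Finset.sum_sub_distrib, Finset.sum_sub_distrib, ← Finset.mul_sum,
          Finset.sum_sub_distrib]
      rw [expand, hmm', sub_self, mul_zero, sub_zero] at key
      linarith


lemma leftPt_eq (N : ℕ) (l h : ℕ → ℝ) {n : ℕ} (hn : n < N) :
    leftPt (N : ℕ∞) l h n = aF l (fun k => h k / l k) (Finset.range N) n := by
  unfold leftPt aF
  have h1 : (∑' k : ℕ, if (k : ℕ∞) < (N : ℕ∞) ∧ h k / l k < h n / l n then l k else 0)
      = ∑ k ∈ Finset.range N, (if h k / l k < h n / l n then l k else 0) := by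
    rw [tsum_eq_sum (s := Finset.range N) (fun k hk => by
      rw [if_neg]
      rintro ⟨hlt, -⟩
      exact hk (Finset.mem_range.mpr (by exact_mod_cast hlt)))]
    refine Finset.sum_congr rfl fun k hk => ?_
    have : (k : ℕ∞) < (N : ℕ∞) := by exact_mod_cast Finset.mem_range.mp hk
    by_cases h2 : h k / l k < h n / l n <;> simp [this, h2]
  have h2 : (∑ k ∈ Finset.range n, if (k : ℕ∞) < (N : ℕ∞) ∧ h k / l k = h n / l n then l k else 0)
      = ∑ k ∈ Finset.range N, (if h k / l k = h n / l n ∧ k < n then l k else 0) := by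
    calc ∑ k ∈ Finset.range n, (if (k : ℕ∞) < (N : ℕ∞) ∧ h k / l k = h n / l n then l k else 0)
        = ∑ k ∈ Finset.range n, (if h k / l k = h n / l n ∧ k < n then l k else 0) := by
          refine Finset.sum_congr rfl fun k hk => ?_
          have hkn : k < n := Finset.mem_range.mp hk
          have hkN : (k : ℕ∞) < (N : ℕ∞) := by exact_mod_cast hkn.trans hn
          by_cases h3 : h k / l k = h n / l n <;> simp [hkN, hkn, h3]
      _ = ∑ k ∈ Finset.range N, (if h k / l k = h n / l n ∧ k < n then l k else 0) :=
          Finset.sum_subset (Finset.range_subset_range.mpr hn.le) (fun k _ hk => by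
            rw [if_neg]
            rintro ⟨-, hlt⟩
            exact hk (Finset.mem_range.mpr hlt))
  rw [h1, h2, ← Finset.sum_add_distrib]
  simp only [prec]
  refine Finset.sum_congr rfl fun k _ => ?_
  by_cases ha : h k / l k < h n / l n
  · have hb : ¬ (h k / l k = h n / l n ∧ k < n) := fun hb => absurd hb.1 (ne_of_lt ha)
    rw [if_pos ha, if_neg hb, add_zero]; exact (if_pos (Or.inl ha)).symm
  · by_cases hb : h k / l k = h n / l n ∧ k < n
    · rw [if_neg ha, if_pos hb, zero_add]; exact (if_pos (Or.inr hb)).symm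
    · rw [if_neg ha, if_neg hb, add_zero]; refine (if_neg ?_).symm
      rintro (hc | hc)
      exacts [ha hc, hb hc]

lemma FLH_eq (N : ℕ) (l h : ℕ → ℝ) (t : ℝ) :
    FLH (N : ℕ∞) l h t
      = ∑ n ∈ Finset.range N, h n * min (max (t - leftPt (N : ℕ∞) l h n) 0 / l n) 1 := by
  unfold FLH
  rw [tsum_eq_sum (s := Finset.range N) (fun n hn => by
    rw [if_neg]
    intro hlt
    exact hn (Finset.mem_range.mpr (by exact_mod_cast hlt)))]
  refine Finset.sum_congr rfl fun n hn => ?_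
  rw [if_pos (by exact_mod_cast Finset.mem_range.mp hn)]

lemma term_eq (l h : ℕ → ℝ) {n : ℕ} (hln : 0 < l n) (x : ℝ) :
    h n * min (x / l n) 1 = (h n / l n) * min x (l n) := by
  rw [show (1 : ℝ) = l n / l n by rw [div_self (ne_of_gt hln)],
    min_div_div_right hln.le]
  ring

lemma sum_mul_clamp_le (A : Finset ℕ) (c φ : ℕ → ℝ) (h0 : ∀ n ∈ A, 0 ≤ φ n)
    (h1 : ∀ n ∈ A, φ n ≤ 1) :
    ∑ n ∈ A, c n * φ n ≤ ∑ n ∈ A, max (c n) 0 := by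
  apply Finset.sum_le_sum
  intro n hn
  rcases le_total (c n) 0 with hc | hc
  · exact (mul_nonpos_of_nonpos_of_nonneg hc (h0 n hn)).trans (le_max_right _ _)
  · calc c n * φ n ≤ c n * 1 := by nlinarith [h1 n hn]
      _ = c n := mul_one _
      _ ≤ max (c n) 0 := le_max_left _ _

end FLHaux

/-- Lemma 1(b): comparison of the convex functions `F_{l,h}`, `F_{l,h'}` and of the hybrid
function `G_{l,h,h'}` (heights `h`, left endpoints from `h'`): the sup-norm distances
`‖F_{l,h} − F_{l,h'}‖_∞` and `‖F_{l,h'} − G_{l,h,h'}‖_∞` are bounded by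
`max{Σ (h_n − h'_n)⁺, Σ (h'_n − h_n)⁺}`. -/
theorem FLH_comparison
    (T : ℝ) (hT : 0 < T) (N : ℕ) (l h h' : ℕ → ℝ)
    (hl : ∀ n < N, 0 < l n)
    (hlsum : ∑ n ∈ Finset.range N, l n = T) :
    ∀ t ∈ Set.Icc (0 : ℝ) T,
      |FLH (N : ℕ∞) l h t - FLH (N : ℕ∞) l h' t|
          ≤ max (∑ n ∈ Finset.range N, max (h n - h' n) 0)
              (∑ n ∈ Finset.range N, max (h' n - h n) 0) ∧
      |FLH (N : ℕ∞) l h' t -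
          ∑ n ∈ Finset.range N, h n * min (max (t - leftPt (N : ℕ∞) l h' n) 0 / l n) 1|
          ≤ max (∑ n ∈ Finset.range N, max (h n - h' n) 0)
              (∑ n ∈ Finset.range N, max (h' n - h n) 0) := by

  intro t _
  have hlA : ∀ n ∈ Finset.range N, 0 < l n := fun n hn => hl n (Finset.mem_range.mp hn)
  have hφ0 : ∀ (g : ℕ → ℝ), ∀ n ∈ Finset.range N,
      0 ≤ min (max (t - leftPt (N : ℕ∞) l g n) 0 / l n) 1 := fun g n hn =>
    le_min (div_nonneg (le_max_right _ _) (hlA n hn).le) zero_le_one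
  have hφ1 : ∀ (g : ℕ → ℝ), ∀ n ∈ Finset.range N,
      min (max (t - leftPt (N : ℕ∞) l g n) 0 / l n) 1 ≤ 1 := fun g n hn =>
    min_le_right _ _
  have hdiff : ∀ (u v g : ℕ → ℝ),
      (∑ n ∈ Finset.range N, u n * min (max (t - leftPt (N : ℕ∞) l g n) 0 / l n) 1)
      - (∑ n ∈ Finset.range N, v n * min (max (t - leftPt (N : ℕ∞) l g n) 0 / l n) 1)
      = ∑ n ∈ Finset.range N,
          (u n - v n) * min (max (t - leftPt (N : ℕ∞) l g n) 0 / l n) 1 := by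
    intro u v g
    rw [← Finset.sum_sub_distrib]
    exact Finset.sum_congr rfl fun n _ => by ring
  have hbound : ∀ (u v g : ℕ → ℝ),
      (∑ n ∈ Finset.range N,
          (u n - v n) * min (max (t - leftPt (N : ℕ∞) l g n) 0 / l n) 1)
      ≤ ∑ n ∈ Finset.range N, max (u n - v n) 0 :=
    fun u v g => FLHaux.sum_mul_clamp_le _ _ _ (hφ0 g) (hφ1 g)
  have hmono : ∀ (u g : ℕ → ℝ),
      FLH (N : ℕ∞) l u t ≤
      ∑ n ∈ Finset.range N, u n * min (max (t - leftPt (N : ℕ∞) l g n) 0 / l n) 1 := by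
    intro u g
    rw [FLHaux.FLH_eq]
    have e1 : ∀ n ∈ Finset.range N,
        u n * min (max (t - leftPt (N : ℕ∞) l u n) 0 / l n) 1
        = (u n / l n) *
            min (max (t - FLHaux.aF l (fun k => u k / l k) (Finset.range N) n) 0) (l n) := by
      intro n hn
      rw [FLHaux.term_eq l u (hlA n hn), FLHaux.leftPt_eq N l u (Finset.mem_range.mp hn)]
    have e2 : ∀ n ∈ Finset.range N,
        u n * min (max (t - leftPt (N : ℕ∞) l g n) 0 / l n) 1
        = (u n / l n) * min (max (t - leftPt (N : ℕ∞) l g n) 0) (l n) := by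
      intro n hn
      rw [FLHaux.term_eq l u (hlA n hn)]
    rw [Finset.sum_congr rfl e1, Finset.sum_congr rfl e2]
    refine FLHaux.HL l (fun k => u k / l k) (Finset.range N) hlA t
      (fun n => min (max (t - leftPt (N : ℕ∞) l g n) 0) (l n))
      (fun n hn => le_min (le_max_right _ _) (hlA n hn).le)
      (fun n hn => min_le_right _ _) ?_
    show ∑ n ∈ Finset.range N, min (max (t - leftPt (N : ℕ∞) l g n) 0) (l n)
        = min (max t 0) (∑ n ∈ Finset.range N, l n)
    have e3 : ∑ n ∈ Finset.range N, min (max (t - leftPt (N : ℕ∞) l g n) 0) (l n)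
        = ∑ n ∈ Finset.range N,
            min (max (t - FLHaux.aF l (fun k => g k / l k) (Finset.range N) n) 0) (l n) :=
      Finset.sum_congr rfl fun n hn => by
        rw [FLHaux.leftPt_eq N l g (Finset.mem_range.mp hn)]
    rw [e3]
    exact FLHaux.sum_ramp l (fun k => g k / l k) t (Finset.range N) hlA
  have key1 := hmono h h'
  have key2 := hmono h' h
  have eqh := FLHaux.FLH_eq N l h t
  have eqh' := FLHaux.FLH_eq N l h' t
  have d1 := hdiff h h' h'
  have d2 := hdiff h' h h
  have d3 := hdiff h' h h'
  have b1 := hbound h h' h'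
  have b2 := hbound h' h h
  have b3 := hbound h' h h'
  have hP : (∑ n ∈ Finset.range N, max (h n - h' n) 0)
      ≤ max (∑ n ∈ Finset.range N, max (h n - h' n) 0)
          (∑ n ∈ Finset.range N, max (h' n - h n) 0) := le_max_left _ _
  have hQ : (∑ n ∈ Finset.range N, max (h' n - h n) 0)
      ≤ max (∑ n ∈ Finset.range N, max (h n - h' n) 0)
          (∑ n ∈ Finset.range N, max (h' n - h n) 0) := le_max_right _ _
  constructor
  · rw [abs_le]
    exact ⟨by linarith, by linarith⟩
  · rw [abs_le]
    exact ⟨by linarith, by linarith⟩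

end
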